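/- For the K_{ℙ¹×ℙ¹} mirror curve y² + (1 + x + q₁x²)y + q₂x² = 0, the j-invariant of the associated elliptic curve equals (s-16)³/(s-32) where s = (16(q₁² + q₂²) - 8(q₁ + q₂) + 1)/(q₁q₂); hence j depends on (q₁,q₂) only through s. -/

import Mathlib

/-- For the `K_{ℙ¹×ℙ¹}` mirror curve
`y² + (1 + x + q₁x²)y + q₂x² = 0` (with `q₁, q₂ ∈ ℂ*`), whose associated elliptic curve
is the Weierstrass form `Y² = 4X³ - aX - b` with
`a = (16q₁² - 16q₁q₂ + 16q₂² - 8q₁ - 8q₂ + 1)/(2^{1/3}·24·κ⁴)` and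
`b = (4q₁ + 4q₂ - 1)(16q₁² - 40q₁q₂ + 16q₂² - 8q₁ - 8q₂ + 1)/(864κ⁶)`
(here `c = 2^{1/3}` and `κ ≠ 0`), the `j`-invariant `j = 1728a³/(a³ - 27b²)` equals
`(s - 16)³/(s - 32)` where `s = (16(q₁² + q₂²) - 8(q₁ + q₂) + 1)/(q₁q₂)`; hence `j`
depends on `(q₁, q₂)` only through `s`. -/
theorem j_invariant_KP1xP1 (q₁ q₂ κ c : ℂ)
    (hq₁ : q₁ ≠ 0) (hq₂ : q₂ ≠ 0) (hκ : κ ≠ 0) (hc : c ^ 3 = 2)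
    (hsm : (16 * (q₁ ^ 2 + q₂ ^ 2) - 8 * (q₁ + q₂) + 1) / (q₁ * q₂) ≠ 32) :
    (fun a b => 1728 * a ^ 3 / (a ^ 3 - 27 * b ^ 2))
        ((16 * q₁ ^ 2 - 16 * q₁ * q₂ + 16 * q₂ ^ 2 - 8 * q₁ - 8 * q₂ + 1) /
          (c * 24 * κ ^ 4))
        ((4 * q₁ + 4 * q₂ - 1) *
            (16 * q₁ ^ 2 - 40 * q₁ * q₂ + 16 * q₂ ^ 2 - 8 * q₁ - 8 * q₂ + 1) /
          (864 * κ ^ 6)) =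
      ((16 * (q₁ ^ 2 + q₂ ^ 2) - 8 * (q₁ + q₂) + 1) / (q₁ * q₂) - 16) ^ 3 /
        ((16 * (q₁ ^ 2 + q₂ ^ 2) - 8 * (q₁ + q₂) + 1) / (q₁ * q₂) - 32) := by
  have hc0 : c ≠ 0 := by
    intro h; rw [h] at hc; norm_num at hc
  have hqq : q₁ * q₂ ≠ 0 := mul_ne_zero hq₁ hq₂
  have hN32 : 16 * (q₁ ^ 2 + q₂ ^ 2) - 8 * (q₁ + q₂) + 1 - 32 * (q₁ * q₂) ≠ 0 := by
    intro h
    apply hsm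
    rw [div_eq_iff hqq]
    linear_combination h
  have hκ4 : κ ^ 4 ≠ 0 := pow_ne_zero _ hκ
  have hκ12 : κ ^ 12 ≠ 0 := pow_ne_zero _ hκ
  simp only []
  have h1 : ((16 * q₁ ^ 2 - 16 * q₁ * q₂ + 16 * q₂ ^ 2 - 8 * q₁ - 8 * q₂ + 1) /
      (c * 24 * κ ^ 4)) ^ 3 =
      (16 * q₁ ^ 2 - 16 * q₁ * q₂ + 16 * q₂ ^ 2 - 8 * q₁ - 8 * q₂ + 1) ^ 3 /
      (27648 * κ ^ 12) := by
    rw [div_pow]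
    congr 1
    linear_combination 13824 * κ ^ 12 * hc
  rw [h1]
  have h2 : (16 * q₁ ^ 2 - 16 * q₁ * q₂ + 16 * q₂ ^ 2 - 8 * q₁ - 8 * q₂ + 1) ^ 3 /
      (27648 * κ ^ 12) -
      27 * ((4 * q₁ + 4 * q₂ - 1) *
        (16 * q₁ ^ 2 - 40 * q₁ * q₂ + 16 * q₂ ^ 2 - 8 * q₁ - 8 * q₂ + 1) /
        (864 * κ ^ 6)) ^ 2 =
      1728 * (q₁ * q₂) ^ 2 *
        (16 * (q₁ ^ 2 + q₂ ^ 2) - 8 * (q₁ + q₂) + 1 - 32 * (q₁ * q₂)) /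
        (27648 * κ ^ 12) := by
    field_simp
    ring
  rw [h2]
  have h3 : (16 * (q₁ ^ 2 + q₂ ^ 2) - 8 * (q₁ + q₂) + 1) / (q₁ * q₂) - 16 =
      (16 * q₁ ^ 2 - 16 * q₁ * q₂ + 16 * q₂ ^ 2 - 8 * q₁ - 8 * q₂ + 1) / (q₁ * q₂) := by
    field_simp; ring
  have h4 : (16 * (q₁ ^ 2 + q₂ ^ 2) - 8 * (q₁ + q₂) + 1) / (q₁ * q₂) - 32 =
      (16 * (q₁ ^ 2 + q₂ ^ 2) - 8 * (q₁ + q₂) + 1 - 32 * (q₁ * q₂)) / (q₁ * q₂) := by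
    field_simp
  rw [h3, h4]
  rw [mul_div_assoc', div_div_div_eq, div_pow, div_div_div_eq,
    div_eq_div_iff
      (mul_ne_zero (mul_ne_zero (by norm_num) hκ12)
        (mul_ne_zero (mul_ne_zero (by norm_num) (pow_ne_zero _ hqq)) hN32))
      (mul_ne_zero (pow_ne_zero _ hqq) hN32)]
  ring
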